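/- Let A be commutative, M an A-symmetric A-bimodule, and consider the triple (A,A,id). Then H₂((A,A,id);M) = 0; equivalently, ker ∂₂ = im ∂₃, where ∂₂(m⊗a⊗b⊗α) = maα⊗b − m⊗aαb + bαm⊗a and ∂₃(m⊗a⊗b⊗c⊗α⊗β⊗γ) = maαβ⊗b⊗c⊗γ − m⊗aαb⊗c⊗βγ + m⊗a⊗bγc⊗αβ − cβγm⊗a⊗b⊗α. -/

import Mathlib

/-!
STATEMENT 16: Let A be commutative, M an A-symmetric A-bimodule, and consider the
triple (A,A,id).  Then H₂((A,A,id);M) = 0; equivalently, ker ∂₂ = im ∂₃, where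
∂₂(m⊗a⊗b⊗α) = maα⊗b − m⊗aαb + bαm⊗a and
∂₃(m⊗a⊗b⊗c⊗α⊗β⊗γ) = maαβ⊗b⊗c⊗γ − m⊗aαb⊗c⊗βγ + m⊗a⊗bγc⊗αβ − cβγm⊗a⊗b⊗α.

Here k is a commutative ring, the A-bimodule M is A-symmetric (`IsCentralScalar A M`)
and k acts centrally.
-/

open TensorProduct MulOpposite

set_option maxSynthPendingDepth 8
set_option maxHeartbeats 2000000

theorem secondaryHochschild_H2_of_self_triple_eq_zero
    (k : Type*) [CommRing k]
    (A : Type*) [CommRing A] [Algebra k A]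
    (M : Type*) [AddCommGroup M] [Module k M]
    [Module A M] [Module Aᵐᵒᵖ M] [IsCentralScalar A M]
    [IsScalarTower k A M]
    -- the secondary Hochschild differentials ∂₂, ∂₃ of the triple (A,A,id)
    (p2 : M ⊗[k] A ⊗[k] A ⊗[k] A →ₗ[k] M ⊗[k] A)
    (hp2 : ∀ (m : M) (a b α : A),
      p2 (m ⊗ₜ[k] a ⊗ₜ[k] b ⊗ₜ[k] α) =
        (op (a * α) • m) ⊗ₜ[k] b - m ⊗ₜ[k] (a * α * b) + ((b * α) • m) ⊗ₜ[k] a)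
    (p3 : M ⊗[k] A ⊗[k] A ⊗[k] A ⊗[k] A ⊗[k] A ⊗[k] A →ₗ[k] M ⊗[k] A ⊗[k] A ⊗[k] A)
    (hp3 : ∀ (m : M) (a b c α β γ : A),
      p3 (m ⊗ₜ[k] a ⊗ₜ[k] b ⊗ₜ[k] c ⊗ₜ[k] α ⊗ₜ[k] β ⊗ₜ[k] γ) =
        (op (a * (α * β)) • m) ⊗ₜ[k] b ⊗ₜ[k] c ⊗ₜ[k] γ
        - m ⊗ₜ[k] (a * α * b) ⊗ₜ[k] c ⊗ₜ[k] (β * γ)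
        + m ⊗ₜ[k] a ⊗ₜ[k] (b * γ * c) ⊗ₜ[k] (α * β)
        - ((c * (β * γ)) • m) ⊗ₜ[k] a ⊗ₜ[k] b ⊗ₜ[k] α) :
    LinearMap.ker p2 = LinearMap.range p3 := by
  classical
  -- the contracting homotopy s1 : C1 → C2, m ⊗ c ↦ 2(c•m)⊗1⊗1⊗1 − m⊗1⊗1⊗c
  let s1 : M ⊗[k] A →ₗ[k] M ⊗[k] A ⊗[k] A ⊗[k] A :=
    TensorProduct.lift (LinearMap.mk₂ k
      (fun m c => (2 : ℤ) • ((c • m) ⊗ₜ[k] (1 : A) ⊗ₜ[k] (1 : A) ⊗ₜ[k] (1 : A))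
        - m ⊗ₜ[k] (1 : A) ⊗ₜ[k] (1 : A) ⊗ₜ[k] c)
      (by intro m₁ m₂ c; simp [smul_add, add_tmul, tmul_add]; abel)
      (by intro t m c
          simp only [smul_comm c t m, ← TensorProduct.smul_tmul', smul_comm (2 : ℤ) t,
            smul_sub])
      (by intro m c₁ c₂; simp [add_smul, add_tmul, tmul_add, smul_add]; abel)
      (by intro t m c
          simp only [smul_assoc, ← TensorProduct.smul_tmul', tmul_smul, smul_comm (2 : ℤ) t,
            smul_sub]))
  have hs1 : ∀ (m : M) (c : A),
      s1 (m ⊗ₜ[k] c) =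
        (2 : ℤ) • ((c • m) ⊗ₜ[k] (1 : A) ⊗ₜ[k] (1 : A) ⊗ₜ[k] (1 : A))
          - m ⊗ₜ[k] (1 : A) ⊗ₜ[k] (1 : A) ⊗ₜ[k] c := by
    intro m c; simp [s1]
  -- p2 ∘ p3 = 0
  have hz : ∀ y, p2 (p3 y) = 0 := by
    intro y
    have : y ∈ LinearMap.ker (p2 ∘ₗ p3) := by
      induction y using TensorProduct.induction_on with
      | zero => exact Submodule.zero_mem _
      | add u v hu hv => exact Submodule.add_mem _ hu hv
      | tmul t ga =>
        induction t using TensorProduct.induction_on with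
        | zero => rw [zero_tmul]; exact Submodule.zero_mem _
        | add u v hu hv => rw [add_tmul]; exact Submodule.add_mem _ hu hv
        | tmul t be =>
          induction t using TensorProduct.induction_on with
          | zero => rw [zero_tmul, zero_tmul]; exact Submodule.zero_mem _
          | add u v hu hv => rw [add_tmul, add_tmul]; exact Submodule.add_mem _ hu hv
          | tmul t al =>
            induction t using TensorProduct.induction_on with
            | zero => rw [zero_tmul, zero_tmul, zero_tmul]; exact Submodule.zero_mem _
            | add u v hu hv => rw [add_tmul, add_tmul, add_tmul]; exact Submodule.add_mem _ hu hv
            | tmul t c =>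
              induction t using TensorProduct.induction_on with
              | zero => rw [zero_tmul, zero_tmul, zero_tmul, zero_tmul]; exact Submodule.zero_mem _
              | add u v hu hv => rw [add_tmul, add_tmul, add_tmul, add_tmul]; exact Submodule.add_mem _ hu hv
              | tmul t b =>
                induction t using TensorProduct.induction_on with
                | zero => rw [zero_tmul, zero_tmul, zero_tmul, zero_tmul, zero_tmul]; exact Submodule.zero_mem _
                | add u v hu hv => rw [add_tmul, add_tmul, add_tmul, add_tmul, add_tmul]; exact Submodule.add_mem _ hu hv
                | tmul m a =>
                  rw [LinearMap.mem_ker, LinearMap.comp_apply, hp3]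
                  simp only [map_sub, map_add, hp2, op_smul_eq_smul, smul_smul]
                  ring_nf
                  abel
    simpa using this
  -- the key homotopy identity on pure tensors
  have key : ∀ (m : M) (a b α : A),
      (m ⊗ₜ[k] a ⊗ₜ[k] b ⊗ₜ[k] α : M ⊗[k] A ⊗[k] A ⊗[k] A)
        - s1 (p2 (m ⊗ₜ[k] a ⊗ₜ[k] b ⊗ₜ[k] α)) ∈ LinearMap.range p3 := by
    intro m a b α
    refine ⟨m ⊗ₜ[k] (1:A) ⊗ₜ[k] (1:A) ⊗ₜ[k] (1:A) ⊗ₜ[k] (1:A) ⊗ₜ[k] a ⊗ₜ[k] (α * b)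
      - m ⊗ₜ[k] (1:A) ⊗ₜ[k] (1:A) ⊗ₜ[k] (1:A) ⊗ₜ[k] a ⊗ₜ[k] b ⊗ₜ[k] α
      - m ⊗ₜ[k] (1:A) ⊗ₜ[k] α ⊗ₜ[k] (1:A) ⊗ₜ[k] (1:A) ⊗ₜ[k] a ⊗ₜ[k] b
      + m ⊗ₜ[k] (1:A) ⊗ₜ[k] α ⊗ₜ[k] (1:A) ⊗ₜ[k] (1:A) ⊗ₜ[k] (a * b) ⊗ₜ[k] (1:A)
      + m ⊗ₜ[k] a ⊗ₜ[k] (1:A) ⊗ₜ[k] (1:A) ⊗ₜ[k] (1:A) ⊗ₜ[k] α ⊗ₜ[k] b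
      + m ⊗ₜ[k] a ⊗ₜ[k] (1:A) ⊗ₜ[k] (1:A) ⊗ₜ[k] (α * b) ⊗ₜ[k] (1:A) ⊗ₜ[k] (1:A)
      - m ⊗ₜ[k] b ⊗ₜ[k] α ⊗ₜ[k] (1:A) ⊗ₜ[k] a ⊗ₜ[k] (1:A) ⊗ₜ[k] (1:A)
      - (a • m) ⊗ₜ[k] (1:A) ⊗ₜ[k] (1:A) ⊗ₜ[k] (1:A) ⊗ₜ[k] α ⊗ₜ[k] b ⊗ₜ[k] (1:A)
      - ((α * b) • m) ⊗ₜ[k] (1:A) ⊗ₜ[k] (1:A) ⊗ₜ[k] (1:A) ⊗ₜ[k] a ⊗ₜ[k] (1:A) ⊗ₜ[k] (1:A), ?_⟩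
    rw [hp2]
    simp only [map_sub, map_add, hp3, hs1, op_smul_eq_smul, smul_smul, smul_sub, smul_add]
    ring_nf
    simp only [one_smul]
    abel
  -- extend the key identity to all of C2 by linearity
  have keyall : ∀ x : M ⊗[k] A ⊗[k] A ⊗[k] A,
      x - s1 (p2 x) ∈ LinearMap.range p3 := by
    intro x
    have hx : x ∈ Submodule.comap (LinearMap.id - s1 ∘ₗ p2) (LinearMap.range p3) := by
      induction x using TensorProduct.induction_on with
      | zero => exact Submodule.zero_mem _
      | add u v hu hv => exact Submodule.add_mem _ hu hv
      | tmul t al =>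
        induction t using TensorProduct.induction_on with
        | zero => rw [zero_tmul]; exact Submodule.zero_mem _
        | add u v hu hv => rw [add_tmul]; exact Submodule.add_mem _ hu hv
        | tmul t b =>
          induction t using TensorProduct.induction_on with
          | zero => rw [zero_tmul, zero_tmul]; exact Submodule.zero_mem _
          | add u v hu hv => rw [add_tmul, add_tmul]; exact Submodule.add_mem _ hu hv
          | tmul m a =>
            simpa [Submodule.mem_comap, LinearMap.sub_apply] using key m a b al
    simpa [Submodule.mem_comap, LinearMap.sub_apply] using hx
  apply le_antisymm
  · intro x hx
    have h2 : p2 x = 0 := hx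
    have := keyall x
    rwa [h2, map_zero, sub_zero] at this
  · rintro x ⟨y, rfl⟩
    exact hz y
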